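/- Let M be a positive semidefinite 2×2 block operator matrix M = [[A, B],[B*, C]] on H₁ ⊕ H₂ admitting a factorization M = L*L where L = [[P, 0],[Q, R]] is lower triangular. Then the Schur complement of M supported on the first block, S(M;{0}) (the largest positive operator X on H₁ with M - X⊕0 ≥ 0), equals P*P if and only if ran Q ⊆ closure(ran R). -/

import Mathlib

open scoped InnerProductSpace
open ContinuousLinearMap

/-- Positivity of the block operator matrix `[[A, B], [B*, C]]` on `H₁ ⊕ H₂`,
expressed through its quadratic form. -/
def BlockPos2 {H₁ H₂ : Type*} [NormedAddCommGroup H₁] [InnerProductSpace ℂ H₁]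
    [NormedAddCommGroup H₂] [InnerProductSpace ℂ H₂]
    (A : H₁ →L[ℂ] H₁) (B : H₂ →L[ℂ] H₁) (C : H₂ →L[ℂ] H₂) : Prop :=
  ∀ (x : H₁) (y : H₂),
    0 ≤ (⟪A x, x⟫_ℂ).re + 2 * (⟪B y, x⟫_ℂ).re + (⟪C y, y⟫_ℂ).re

/-- `S` is the Schur complement of the positive block operator matrix
`[[A, B], [B*, C]]` supported on the first block: the largest positive operator
`X` on `H₁` such that `M - X ⊕ 0 ≥ 0`. -/
def IsSchurComplementFst {H₁ H₂ : Type*} [NormedAddCommGroup H₁] [InnerProductSpace ℂ H₁]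
    [NormedAddCommGroup H₂] [InnerProductSpace ℂ H₂] [CompleteSpace H₁] [CompleteSpace H₂]
    (A : H₁ →L[ℂ] H₁) (B : H₂ →L[ℂ] H₁) (C : H₂ →L[ℂ] H₂) (S : H₁ →L[ℂ] H₁) : Prop :=
  S.IsPositive ∧ BlockPos2 (A - S) B C ∧
    ∀ X : H₁ →L[ℂ] H₁, X.IsPositive → BlockPos2 (A - X) B C →
      ∀ x : H₁, (⟪X x, x⟫_ℂ).re ≤ (⟪S x, x⟫_ℂ).re

private lemma re_inner_self' {H : Type*} [NormedAddCommGroup H] [InnerProductSpace ℂ H]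
    (u : H) : (⟪u, u⟫_ℂ).re = ‖u‖ ^ 2 := by
  have := @inner_self_eq_norm_sq ℂ H _ _ _ u
  simpa using this

private lemma form_eq' {H : Type*} [NormedAddCommGroup H] [InnerProductSpace ℂ H]
    (u v : H) :
    ‖u‖ ^ 2 + 2 * (⟪v, u⟫_ℂ).re + ‖v‖ ^ 2 = ‖u + v‖ ^ 2 := by
  rw [@norm_add_sq ℂ, inner_re_symm]
  simp

set_option maxHeartbeats 1600000 in
/-- If `M = [[A,B],[B*,C]] = L* L` with `L = [[P,0],[Q,R]]` lower triangular, then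
`S(M;{0}) = P*P` iff `ran Q ⊆ closure (ran R)`. -/
theorem schur_complement_eq_iff_range_subset
    {H₁ H₂ : Type*} [NormedAddCommGroup H₁] [InnerProductSpace ℂ H₁]
    [NormedAddCommGroup H₂] [InnerProductSpace ℂ H₂] [CompleteSpace H₁] [CompleteSpace H₂]
    (A P : H₁ →L[ℂ] H₁) (C R : H₂ →L[ℂ] H₂) (B : H₂ →L[ℂ] H₁) (Q : H₁ →L[ℂ] H₂)
    (hA : A = P.adjoint ∘L P + Q.adjoint ∘L Q)
    (hB : B = Q.adjoint ∘L R)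
    (hC : C = R.adjoint ∘L R) :
    IsSchurComplementFst A B C (P.adjoint ∘L P) ↔
      Set.range Q ⊆ closure (Set.range R) := by
  subst hA hB hC
  constructor
  · -- forward direction
    rintro ⟨-, -, hmax⟩ _ ⟨x₀, rfl⟩
    set K : Submodule ℂ H₂ := (LinearMap.range (R : H₂ →ₗ[ℂ] H₂)).topologicalClosure with hK
    haveI : CompleteSpace K := (Submodule.isClosed_topologicalClosure _).completeSpace_coe
    have hranK : ∀ y : H₂, R y ∈ K := fun y =>
      Submodule.le_topologicalClosure _ (LinearMap.mem_range_self _ y)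
    set Pr : H₂ →L[ℂ] H₂ := K.subtypeL ∘L (K.orthogonalProjection) with hPr
    set D : H₁ →L[ℂ] H₂ := Q - Pr ∘L Q with hD
    have hDapp : ∀ x : H₁, D x = Q x - Pr (Q x) := fun x => rfl
    have hDperp : ∀ x : H₁, D x ∈ Kᗮ := fun x => by
      rw [hDapp]
      exact Submodule.sub_starProjection_mem_orthogonal (K := K) (Q x)
    have hQx : ∀ x : H₁, Q x = Pr (Q x) + D x := fun x => by rw [hDapp]; abel
    have hPrK : ∀ v : H₂, Pr v ∈ K := fun v => by
      rw [hPr]; exact Submodule.coe_mem _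
    set X : H₁ →L[ℂ] H₁ := P.adjoint ∘L P + D.adjoint ∘L D with hX
    have hXpos : X.IsPositive := by
      have h1 := (isPositive_one (E := H₁)).adjoint_conj P
      have h2 := (isPositive_one (E := H₂)).adjoint_conj D
      simp only [comp_id, one_def, id_comp] at h1 h2
      exact h1.add h2
    have hXblock : BlockPos2 ((P.adjoint ∘L P + Q.adjoint ∘L Q) - X) (Q.adjoint ∘L R)
        (R.adjoint ∘L R) := by
      intro x y
      have hzD : ∀ v ∈ K, ⟪v, D x⟫_ℂ = 0 := (Submodule.mem_orthogonal K (D x)).mp (hDperp x)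
      have hpyth : ‖Q x‖ ^ 2 = ‖Pr (Q x)‖ ^ 2 + ‖D x‖ ^ 2 := by
        have h := @norm_add_sq ℂ _ _ _ _ (Pr (Q x)) (D x)
        rw [hzD _ (hPrK (Q x))] at h
        calc ‖Q x‖ ^ 2 = ‖Pr (Q x) + D x‖ ^ 2 := by rw [← hQx x]
          _ = _ := by rw [h]; simp
      have e1 : (⟪((P.adjoint ∘L P + Q.adjoint ∘L Q) - X) x, x⟫_ℂ).re = ‖Pr (Q x)‖ ^ 2 := by
        have happ : ((P.adjoint ∘L P + Q.adjoint ∘L Q) - X) x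
            = P.adjoint (P x) + Q.adjoint (Q x) - (P.adjoint (P x) + D.adjoint (D x)) := by
          simp only [hX, sub_apply, add_apply, comp_apply]
        rw [happ]
        simp only [inner_sub_left, inner_add_left, adjoint_inner_left, Complex.sub_re,
          Complex.add_re, re_inner_self']
        linarith [hpyth]
      have e2 : (⟪(Q.adjoint ∘L R) y, x⟫_ℂ).re = (⟪R y, Pr (Q x)⟫_ℂ).re := by
        rw [comp_apply, adjoint_inner_left]
        have h : (⟪R y, Q x⟫_ℂ) = ⟪R y, Pr (Q x) + D x⟫_ℂ := by rw [← hQx x]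
        rw [h, inner_add_right, hzD _ (hranK y), add_zero]
      have e3 : (⟪(R.adjoint ∘L R) y, y⟫_ℂ).re = ‖R y‖ ^ 2 := by
        rw [comp_apply, adjoint_inner_left, re_inner_self']
      rw [e1, e2, e3, form_eq']
      exact sq_nonneg _
    have hle := hmax X hXpos hXblock x₀
    have hXx : (⟪X x₀, x₀⟫_ℂ).re = ‖P x₀‖ ^ 2 + ‖D x₀‖ ^ 2 := by
      have happ : X x₀ = P.adjoint (P x₀) + D.adjoint (D x₀) := by
        simp only [hX, add_apply, comp_apply]
      rw [happ, inner_add_left, adjoint_inner_left, adjoint_inner_left]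
      simp only [Complex.add_re, re_inner_self']
    have hPx : (⟪(P.adjoint ∘L P) x₀, x₀⟫_ℂ).re = ‖P x₀‖ ^ 2 := by
      rw [comp_apply, adjoint_inner_left, re_inner_self']
    rw [hXx, hPx] at hle
    have hD0 : D x₀ = 0 := by
      have h2 : ‖D x₀‖ ^ 2 ≤ 0 := by linarith
      simpa using le_antisymm h2 (sq_nonneg _)
    have hmem : Q x₀ ∈ K := by
      rw [hQx x₀, hD0, add_zero]
      exact hPrK (Q x₀)
    have hKc : (K : Set H₂) = closure (Set.range R) := by
      rw [hK, Submodule.topologicalClosure_coe, LinearMap.coe_range]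
      rfl
    rw [← hKc]
    exact hmem
  · -- backward direction
    intro hsub
    refine ⟨?_, ?_, ?_⟩
    · have h1 := (isPositive_one (E := H₁)).adjoint_conj P
      simp only [comp_id, one_def, id_comp] at h1
      exact h1
    · have hQQ : (P.adjoint ∘L P + Q.adjoint ∘L Q) - P.adjoint ∘L P = Q.adjoint ∘L Q :=
        add_sub_cancel_left _ _
      rw [hQQ]
      intro x y
      have e1 : (⟪(Q.adjoint ∘L Q) x, x⟫_ℂ).re = ‖Q x‖ ^ 2 := by
        rw [comp_apply, adjoint_inner_left, re_inner_self']
      have e2 : (⟪(Q.adjoint ∘L R) y, x⟫_ℂ).re = (⟪R y, Q x⟫_ℂ).re := by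
        rw [comp_apply, adjoint_inner_left]
      have e3 : (⟪(R.adjoint ∘L R) y, y⟫_ℂ).re = ‖R y‖ ^ 2 := by
        rw [comp_apply, adjoint_inner_left, re_inner_self']
      rw [e1, e2, e3, form_eq']
      exact sq_nonneg _
    · intro X hXpos hXb x
      have hgoal : (⟪(P.adjoint ∘L P) x, x⟫_ℂ).re = ‖P x‖ ^ 2 := by
        rw [comp_apply, adjoint_inner_left, re_inner_self']
      rw [hgoal]
      refine le_of_forall_pos_le_add fun ε hε => ?_
      obtain ⟨b, ⟨y, rfl⟩, hby⟩ := Metric.mem_closure_iff.mp (hsub ⟨x, rfl⟩) (Real.sqrt ε)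
        (Real.sqrt_pos.mpr hε)
      have key := hXb x (-y)
      have e1 : (⟪((P.adjoint ∘L P + Q.adjoint ∘L Q) - X) x, x⟫_ℂ).re
          = ‖P x‖ ^ 2 + ‖Q x‖ ^ 2 - (⟪X x, x⟫_ℂ).re := by
        have happ : ((P.adjoint ∘L P + Q.adjoint ∘L Q) - X) x
            = P.adjoint (P x) + Q.adjoint (Q x) - X x := by
          simp only [sub_apply, add_apply, comp_apply]
        rw [happ, inner_sub_left, inner_add_left, adjoint_inner_left, adjoint_inner_left]
        simp only [Complex.sub_re, Complex.add_re, re_inner_self']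
      have e2 : (⟪(Q.adjoint ∘L R) (-y), x⟫_ℂ).re = (⟪R (-y), Q x⟫_ℂ).re := by
        rw [comp_apply, adjoint_inner_left]
      have e3 : (⟪(R.adjoint ∘L R) (-y), (-y)⟫_ℂ).re = ‖R (-y)‖ ^ 2 := by
        rw [comp_apply, adjoint_inner_left, re_inner_self']
      rw [e1, e2, e3] at key
      have hform := form_eq' (Q x) (R (-y))
      have hsmall : ‖Q x + R (-y)‖ ^ 2 < ε := by
        have h1 : ‖Q x + R (-y)‖ < Real.sqrt ε := by
          rw [map_neg, ← sub_eq_add_neg, ← dist_eq_norm]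
          exact hby
        nlinarith [norm_nonneg (Q x + R (-y)), Real.sq_sqrt hε.le, Real.sqrt_nonneg ε]
      linarith [key, hform, hsmall]
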